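/- Let f₂ : ℝ → ℝ be continuous with f₂(0) = f₂(θ) = f₂(K₂) = 0 for some 0 < θ < K₂, f₂ < 0 on (0,θ), f₂ > 0 on (θ,K₂), f₂ < 0 on (K₂,∞), and ∫_0^{K₂} f₂(s) ds = 0. Let d₂ > 0 and let U : [0,∞) → ℝ be a C² solution of d₂·U'' + f₂(U) = 0 on [0,∞) with U > 0, U(0) > 0, U(+∞) = 0, U'(+∞) = 0, and assume f₂ is locally Lipschitz. If there exists x₀ ≥ 0 with U(x₀) = K₂, then U ≡ K₂ on [0,∞), contradicting U(+∞) = 0; hence 0 < U < K₂ on [0,∞). -/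

import Mathlib

open Real Filter Set MeasureTheory

/-- Balanced bistable case: a positive solution of `d₂U'' + f₂(U) = 0` on `[0,∞)`
decaying at `+∞` satisfies `0 < U < K₂` on `[0,∞)`. -/
theorem balanced_bistable_below_K2
    (f₂ : ℝ → ℝ) (hf₂c : Continuous f₂) (hflip : LocallyLipschitz f₂)
    (θ K₂ : ℝ) (hθ : 0 < θ) (hθK : θ < K₂)
    (hf₂0 : f₂ 0 = 0) (hf₂θ : f₂ θ = 0) (hf₂K : f₂ K₂ = 0)
    (hf₂neg : ∀ s ∈ Set.Ioo (0:ℝ) θ, f₂ s < 0)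
    (hf₂pos : ∀ s ∈ Set.Ioo θ K₂, 0 < f₂ s)
    (hf₂neg' : ∀ s ∈ Set.Ioi K₂, f₂ s < 0)
    (hmass : (∫ s in (0:ℝ)..K₂, f₂ s) = 0)
    (d₂ : ℝ) (hd₂ : 0 < d₂)
    (U U' U'' : ℝ → ℝ)
    (hU' : ∀ x ≥ (0:ℝ), HasDerivAt U (U' x) x)
    (hU'' : ∀ x ≥ (0:ℝ), HasDerivAt U' (U'' x) x)
    (hode : ∀ x ≥ (0:ℝ), d₂ * U'' x + f₂ (U x) = 0)
    (hUpos : ∀ x ≥ (0:ℝ), 0 < U x) (hU0 : 0 < U 0)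
    (hUlim : Tendsto U atTop (nhds 0))
    (hU'lim : Tendsto U' atTop (nhds 0)) :
    ∀ x ≥ (0:ℝ), 0 < U x ∧ U x < K₂ := by
  have hK₂pos : 0 < K₂ := hθ.trans hθK
  -- the potential F
  set F : ℝ → ℝ := fun u => ∫ s in (0:ℝ)..u, f₂ s with hFdef
  have hFd : ∀ u : ℝ, HasDerivAt F (f₂ u) u := fun u =>
    intervalIntegral.integral_hasDerivAt_right (hf₂c.intervalIntegrable _ _)
      (hf₂c.stronglyMeasurableAtFilter _ _) hf₂c.continuousAt
  have hFc : Continuous F := by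
    have : Differentiable ℝ F := fun u => (hFd u).differentiableAt
    exact this.continuous
  have hF0 : F 0 = 0 := intervalIntegral.integral_same
  have hFK : F K₂ = 0 := hmass
  -- the energy
  set E : ℝ → ℝ := fun x => d₂ / 2 * (U' x) ^ 2 + F (U x) with hEdef
  have hEd : ∀ x ≥ (0:ℝ), HasDerivAt E 0 x := by
    intro x hx
    have h1 : HasDerivAt (fun y => d₂ / 2 * (U' y) ^ 2)
        (d₂ / 2 * (2 * U' x ^ 1 * U'' x)) x := ((hU'' x hx).pow 2).const_mul _
    have h2 : HasDerivAt (fun y => F (U y)) (f₂ (U x) * U' x) x :=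
      (hFd (U x)).comp x (hU' x hx)
    have h3 := h1.add h2
    have h0 : d₂ / 2 * (2 * U' x ^ 1 * U'' x) + f₂ (U x) * U' x = 0 := by
      have hodex := hode x hx
      linear_combination (U' x) * hodex
    rw [h0] at h3
    exact h3
  have hEcont : ∀ x ≥ (0:ℝ), ContinuousAt E x := fun x hx => (hEd x hx).continuousAt
  -- E is constant on [0,∞)
  have hEconst : ∀ x ≥ (0:ℝ), E x = E 0 := by
    intro x hx
    rcases eq_or_lt_of_le hx with h | h
    · rw [← h]
    · have := constant_of_has_deriv_right_zero
        (f := E) (a := 0) (b := x)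
        (fun y hy => (hEcont y hy.1).continuousWithinAt)
        (fun y hy => (hEd y hy.1).hasDerivWithinAt)
      exact this x ⟨hx, le_rfl⟩
  -- E tends to 0 at ∞, hence E ≡ 0
  have hElim : Tendsto E atTop (nhds 0) := by
    have h1 : Tendsto (fun x => d₂ / 2 * (U' x) ^ 2) atTop (nhds (d₂ / 2 * 0 ^ 2)) :=
      (hU'lim.pow 2).const_mul _
    have h2 : Tendsto (fun x => F (U x)) atTop (nhds (F 0)) :=
      (hFc.tendsto 0).comp hUlim
    have := h1.add h2
    simpa [hF0] using this
  have hE0 : E 0 = 0 := by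
    have h2 : Tendsto E atTop (nhds (E 0)) := by
      refine Tendsto.congr' ?_ tendsto_const_nhds
      filter_upwards [eventually_ge_atTop (0:ℝ)] with x hx
      exact (hEconst x hx).symm
    exact tendsto_nhds_unique h2 hElim
  have hEzero : ∀ x ≥ (0:ℝ), d₂ / 2 * (U' x) ^ 2 + F (U x) = 0 := fun x hx => by
    have := hEconst x hx; rw [hE0] at this; exact this
  -- local Lipschitz data for the vector field near the equilibrium (K₂, 0)
  obtain ⟨L, t, ht, hL⟩ := hflip K₂
  obtain ⟨ε, hε, hball⟩ := Metric.mem_nhds_iff.mp ht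
  set s : Set (ℝ × ℝ) := Metric.ball K₂ ε ×ˢ (univ : Set ℝ) with hsdef
  set v : ℝ × ℝ → ℝ × ℝ := fun p => (p.2, -(d₂⁻¹) * f₂ p.1) with hvdef
  set L' : NNReal := max 1 (⟨d₂⁻¹, (inv_pos.mpr hd₂).le⟩ * L) with hL'def
  have hvLip : LipschitzOnWith L' v s := by
    rw [lipschitzOnWith_iff_dist_le_mul]
    rintro p hp q hq
    have hd1 : dist (v p) (v q) = max (dist p.2 q.2)
        (dist (-(d₂⁻¹) * f₂ p.1) (-(d₂⁻¹) * f₂ q.1)) := rfl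
    have hf : dist (f₂ p.1) (f₂ q.1) ≤ L * dist p.1 q.1 :=
      (lipschitzOnWith_iff_dist_le_mul.mp (hL.mono hball)) p.1 hp.1 q.1 hq.1
    have hdp : dist p.1 q.1 ≤ dist p q := by
      rw [Prod.dist_eq]; exact le_max_left _ _
    have hdp2 : dist p.2 q.2 ≤ dist p q := by
      rw [Prod.dist_eq]; exact le_max_right _ _
    rw [hd1]
    apply max_le
    · calc dist p.2 q.2 ≤ 1 * dist p q := by simpa using hdp2
        _ ≤ L' * dist p q := by
          apply mul_le_mul_of_nonneg_right _ dist_nonneg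
          exact_mod_cast le_max_left _ _
    · have heq : -(d₂⁻¹) * f₂ p.1 - -(d₂⁻¹) * f₂ q.1 = -(d₂⁻¹) * (f₂ p.1 - f₂ q.1) := by
        ring
      have : dist (-(d₂⁻¹) * f₂ p.1) (-(d₂⁻¹) * f₂ q.1)
          = d₂⁻¹ * dist (f₂ p.1) (f₂ q.1) := by
        rw [Real.dist_eq, Real.dist_eq, heq, abs_mul, abs_neg,
          abs_of_nonneg (inv_pos.mpr hd₂).le]
      rw [this]
      calc d₂⁻¹ * dist (f₂ p.1) (f₂ q.1) ≤ d₂⁻¹ * (L * dist p.1 q.1) := by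
            apply mul_le_mul_of_nonneg_left hf (inv_pos.mpr hd₂).le
        _ ≤ (d₂⁻¹ * L) * dist p q := by
            rw [← mul_assoc]
            exact mul_le_mul_of_nonneg_left hdp (by positivity)
        _ ≤ L' * dist p q := by
            apply mul_le_mul_of_nonneg_right _ dist_nonneg
            exact_mod_cast le_max_right _ _
  -- the trajectory and the step lemma
  set f : ℝ → ℝ × ℝ := fun x => (U x, U' x) with hfdef
  have hfcont : ∀ x ≥ (0:ℝ), ContinuousAt f x := fun x hx =>
    ((hU' x hx).continuousAt.prodMk (hU'' x hx).continuousAt)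
  have hfder : ∀ x ≥ (0:ℝ), HasDerivAt f (v (f x)) x := by
    intro x hx
    have h : HasDerivAt f (U' x, U'' x) x := (hU' x hx).prodMk (hU'' x hx)
    convert h using 1
    have hodex := hode x hx
    have : U'' x = -(d₂⁻¹) * f₂ (U x) := by field_simp; linarith
    simp [hvdef, hfdef, this]
  have hstep : ∀ x ≥ (0:ℝ), U x = K₂ → U' x = 0 →
      ∃ δ > 0, ∀ t' ∈ Icc x (x + δ), U t' = K₂ ∧ U' t' = 0 := by
    intro x hx hUx hU'x
    have hfx : f x ∈ s := by
      simp [hfdef, hsdef, hUx, hU'x, Metric.mem_ball, hε]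
    have hmem : f ⁻¹' s ∈ nhds x :=
      (hfcont x hx) ((Metric.isOpen_ball.prod isOpen_univ).mem_nhds hfx)
    obtain ⟨δ, hδ, hballsub⟩ := Metric.mem_nhds_iff.mp hmem
    refine ⟨δ / 2, half_pos hδ, ?_⟩
    have hsub : Icc x (x + δ / 2) ⊆ Metric.ball x δ := by
      intro t' ht'
      rw [Real.ball_eq_Ioo]
      constructor <;> [linarith [ht'.1]; linarith [ht'.2]]
    have hpos : ∀ t' ∈ Icc x (x + δ / 2), (0:ℝ) ≤ t' := fun t' ht' => hx.trans ht'.1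
    have := ODE_solution_unique_of_mem_Icc_right
      (v := fun _ : ℝ => v) (s := fun _ : ℝ => s) (K := L')
      (fun _ _ => hvLip)
      (f := f) (g := fun _ => ((K₂, (0:ℝ)) : ℝ × ℝ))
      (a := x) (b := x + δ / 2)
      (fun t' ht' => (hfcont t' (hpos t' ht')).continuousWithinAt)
      (fun t' ht' => (hfder t' (hpos t' (Ico_subset_Icc_self ht'))).hasDerivWithinAt)
      (fun t' ht' => hballsub (hsub (Ico_subset_Icc_self ht')))
      continuousOn_const
      (fun t' _ => by
        have h0 : v ((K₂, (0:ℝ)) : ℝ × ℝ) = (0 : ℝ × ℝ) := by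
          simp [hvdef, hf₂K, Prod.ext_iff]
        show HasDerivWithinAt _ (v ((K₂, (0:ℝ)) : ℝ × ℝ)) (Ici t') t'
        rw [h0]
        exact (hasDerivAt_const t' _).hasDerivWithinAt)
      (fun t' _ => by simp [hsdef, Metric.mem_ball, hε])
      (by simp [hfdef, hUx, hU'x])
    intro t' ht'
    have := this ht'
    simp only [hfdef, Prod.mk.injEq] at this
    exact this
  -- main argument
  intro x hx
  refine ⟨hUpos x hx, ?_⟩
  by_contra hcon
  push_neg at hcon
  -- find a point where U equals K₂
  have hx₂ : ∃ x₂ ≥ (0:ℝ), U x₂ = K₂ := by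
    rcases eq_or_lt_of_le hcon with h | h
    · exact ⟨x, hx, h.symm⟩
    · -- U x > K₂; U eventually < K₂, use IVT
      have hev : ∀ᶠ y in atTop, U y < K₂ := hUlim.eventually_lt_const hK₂pos
      obtain ⟨y, hyK, hyx⟩ := (hev.and (eventually_ge_atTop x)).exists
      have hUc : ContinuousOn U (Icc x y) := fun t' ht' =>
        ((hU' t' (hx.trans ht'.1)).continuousAt).continuousWithinAt
      have hivt := intermediate_value_Icc' hyx hUc
      have hK₂mem : K₂ ∈ Icc (U y) (U x) := ⟨hyK.le, h.le⟩
      obtain ⟨x₂, hx₂mem, hUx₂⟩ := hivt hK₂mem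
      exact ⟨x₂, hx.trans hx₂mem.1, hUx₂⟩
  obtain ⟨x₂, hx₂0, hUx₂⟩ := hx₂
  -- U' x₂ = 0 from the energy identity
  have hU'x₂ : U' x₂ = 0 := by
    have h := hEzero x₂ hx₂0
    rw [hUx₂, hFK] at h
    have : (U' x₂) ^ 2 = 0 := by
      have hd2 : d₂ / 2 > 0 := by linarith
      nlinarith [sq_nonneg (U' x₂)]
    exact pow_eq_zero_iff (n := 2) (by norm_num) |>.mp this
  -- propagate: U = K₂ on [x₂, ∞)
  have hall : ∀ y ≥ x₂, U y = K₂ ∧ U' y = 0 := by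
    by_contra hcon2
    push_neg at hcon2
    obtain ⟨y, hy, hyne⟩ := hcon2
    set A : Set ℝ := {z | x₂ ≤ z ∧ ∀ t' ∈ Icc x₂ z, U t' = K₂ ∧ U' t' = 0} with hAdef
    have hx₂A : x₂ ∈ A := ⟨le_rfl, fun t' ht' => by
      have : t' = x₂ := le_antisymm ht'.2 ht'.1
      rw [this]; exact ⟨hUx₂, hU'x₂⟩⟩
    have hAbdd : ∀ z ∈ A, z < y := by
      intro z hz
      by_contra hzy
      push_neg at hzy
      exact hyne (hz.2 y ⟨hy, hzy⟩).1 (hz.2 y ⟨hy, hzy⟩).2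
    have hAne : A.Nonempty := ⟨x₂, hx₂A⟩
    have hAbdd' : BddAbove A := ⟨y, fun z hz => (hAbdd z hz).le⟩
    set β := sSup A with hβdef
    have hβge : x₂ ≤ β := le_csSup hAbdd' hx₂A
    have hβ0 : (0:ℝ) ≤ β := hx₂0.trans hβge
    -- every point strictly below β in [x₂, β] satisfies the property
    have hbelow : ∀ t' ∈ Ico x₂ β, U t' = K₂ ∧ U' t' = 0 := by
      intro t' ht'
      obtain ⟨z, hzA, hz⟩ := exists_lt_of_lt_csSup hAne ht'.2
      exact hzA.2 t' ⟨ht'.1, hz.le⟩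
    have hβprop : U β = K₂ ∧ U' β = 0 := by
      rcases eq_or_lt_of_le hβge with h | h
      · rw [← h]; exact ⟨hUx₂, hU'x₂⟩
      · have hne : (nhdsWithin β (Iio β)).NeBot := nhdsLT_neBot β
        have hevU : ∀ᶠ t' in nhdsWithin β (Iio β), U t' = K₂ ∧ U' t' = 0 := by
          rw [eventually_nhdsWithin_iff]
          filter_upwards [eventually_gt_nhds h] with t' ht1 ht2
          exact hbelow t' ⟨ht1.le, ht2⟩
        have hUt : Tendsto U (nhdsWithin β (Iio β)) (nhds (U β)) :=
          ((hU' β hβ0).continuousAt.tendsto).mono_left nhdsWithin_le_nhds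
        have hU't : Tendsto U' (nhdsWithin β (Iio β)) (nhds (U' β)) :=
          ((hU'' β hβ0).continuousAt.tendsto).mono_left nhdsWithin_le_nhds
        constructor
        · refine tendsto_nhds_unique hUt ?_
          exact Tendsto.congr' (by filter_upwards [hevU] with a ha using ha.1.symm)
            tendsto_const_nhds
        · refine tendsto_nhds_unique hU't ?_
          exact Tendsto.congr' (by filter_upwards [hevU] with a ha using ha.2.symm)
            tendsto_const_nhds
    have hβA : β ∈ A := by
      refine ⟨hβge, fun t' ht' => ?_⟩
      rcases lt_or_eq_of_le ht'.2 with h | h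
      · exact hbelow t' ⟨ht'.1, h⟩
      · rw [h]; exact hβprop
    obtain ⟨δ, hδ, hδprop⟩ := hstep β hβ0 hβprop.1 hβprop.2
    have : β + δ ∈ A := by
      refine ⟨by linarith, fun t' ht' => ?_⟩
      rcases le_or_gt t' β with h | h
      · exact hβA.2 t' ⟨ht'.1, h⟩
      · exact hδprop t' ⟨h.le, ht'.2⟩
    have := le_csSup hAbdd' this
    linarith
  -- contradiction with U → 0
  have : Tendsto U atTop (nhds K₂) := by
    refine Tendsto.congr' ?_ tendsto_const_nhds
    filter_upwards [eventually_ge_atTop x₂] with z hz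
    exact ((hall z hz).1).symm
  have := tendsto_nhds_unique this hUlim
  linarith
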